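/- The simple objects in the category of ℋ-modules are exactly the modules that equal the one-dimensional simple H_{|α|}(0)-module C_α in degree |α| and are zero in all other degrees. -/

import Mathlib

/-- The data of a sequence of `H_m(0)`-modules with transition maps: a `k`-vector
space `V m` for each `m`, operators `T m i` (the action of the 0-Hecke generator
`π_i ∈ H_m(0)`, meaningful for `1 ≤ i ≤ m - 1`), and `H_m(0)`-equivariant transition
maps `φ m : V m → V (m+1)`. -/
structure HSeq (k : Type) [Field k] where
  V : ℕ → Type
  [acg : ∀ m, AddCommGroup (V m)]
  [mod : ∀ m, Module k (V m)]
  T : ∀ m, ℕ → V m →ₗ[k] V m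
  φ : ∀ m, V m →ₗ[k] V (m + 1)

attribute [instance] HSeq.acg HSeq.mod

variable {k : Type} [Field k]

/-- The composite transition map `V n → V m` for `n ≤ m`. -/
def HSeq.transit (X : HSeq k) {n m : ℕ} (h : n ≤ m) (v : X.V n) : X.V m :=
  Nat.leRecOn h (fun {j} w => X.φ j w) v

/-- `X` is a `ℋ`-module: the `T m i` satisfy the 0-Hecke relations, the transition
maps are equivariant, and (the `ℋ`-module criterion) every element in the image of a
composite transition map `V n → V m` is fixed by `π_j` for `n + 1 ≤ j ≤ m - 1`. -/
def HSeq.IsHModule (X : HSeq k) : Prop :=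
  (∀ m i, 1 ≤ i → i + 1 ≤ m → (X.T m i).comp (X.T m i) = X.T m i) ∧
  (∀ m i, 1 ≤ i → i + 2 ≤ m →
    (X.T m i).comp ((X.T m (i + 1)).comp (X.T m i)) =
      (X.T m (i + 1)).comp ((X.T m i).comp (X.T m (i + 1)))) ∧
  (∀ m i j, 1 ≤ i → i + 1 < j → j + 1 ≤ m →
    (X.T m i).comp (X.T m j) = (X.T m j).comp (X.T m i)) ∧
  (∀ m i, 1 ≤ i → i + 1 ≤ m → (X.T (m + 1) i).comp (X.φ m) = (X.φ m).comp (X.T m i)) ∧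
  (∀ n m (h : n ≤ m) j, n + 1 ≤ j → j + 1 ≤ m →
    ∀ v : X.V n, X.T m j (X.transit h v) = X.transit h v)

/-- A `ℋ`-submodule of `X`: a family of subspaces closed under the 0-Hecke operators
and the transition maps. -/
def HSeq.IsSub (X : HSeq k) (W : ∀ m, Submodule k (X.V m)) : Prop :=
  (∀ m i, 1 ≤ i → i + 1 ≤ m → ∀ v ∈ W m, X.T m i v ∈ W m) ∧
  (∀ m, ∀ v ∈ W m, X.φ m v ∈ W (m + 1))

/-- The descent set `D(α)` of a composition `α`. -/
def compDescents {n : ℕ} (α : Composition n) : Finset ℕ :=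
  (Finset.range (α.length - 1)).image fun i => (α.blocks.take (i + 1)).sum

private lemma exists_common_eigen {k : Type} [Field k] {V : Type} [AddCommGroup V] [Module k V]
    (T : ℕ → V →ₗ[k] V) (n : ℕ)
    (hidem : ∀ i, 1 ≤ i → i + 1 ≤ n → ∀ x, T i (T i x) = T i x)
    (hbraid : ∀ i, 1 ≤ i → i + 2 ≤ n → ∀ x,
      T i (T (i+1) (T i x)) = T (i+1) (T i (T (i+1) x)))
    (hcomm : ∀ i j, 1 ≤ i → i + 1 < j → j + 1 ≤ n → ∀ x, T i (T j x) = T j (T i x))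
    (v : V) (hv : v ≠ 0) :
    ∃ u : V, u ≠ 0 ∧ ∃ c : ℕ → k, (∀ i, c i = 0 ∨ c i = 1) ∧
      ∀ i, 1 ≤ i → i + 1 ≤ n → T i u = c i • u := by
  classical
  have claim : ∀ M : ℕ, ∃ u : V, u ≠ 0 ∧ ∃ c : ℕ → k, (∀ i, c i = 0 ∨ c i = 1) ∧
      ∀ i, 1 ≤ i → i ≤ M → i + 1 ≤ n → T i u = c i • u := by
    intro M
    induction M with
    | zero => exact ⟨v, hv, fun _ => 0, fun _ => Or.inl rfl, by intro i h1 h2 h3; omega⟩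
    | succ M IH =>
      obtain ⟨u, hu, c, hc01, hcT⟩ := IH
      by_cases hn : M + 2 ≤ n
      · -- the interesting case
        let w : ℕ → V := fun j => Nat.rec u (fun j wj => T (M + 1 - j) wj) j
        have hw0 : w 0 = u := rfl
        have hwsucc : ∀ j, w (j + 1) = T (M + 1 - j) (w j) := fun _ => rfl
        have P : ∀ j, j ≤ M + 1 →
            (1 ≤ j → T (M + 2 - j) (w j) = w j) ∧
            (∀ i, 1 ≤ i → i + 1 < M + 2 - j → T i (w j) = c i • w j) ∧
            (∀ i, M + 2 - j < i → i ≤ M + 1 → T i (w j) = c (i - 1) • w j) := by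
          intro j
          induction j using Nat.strong_induction_on with
          | _ j IH2 =>
            match j with
            | 0 =>
              intro _
              refine ⟨by omega, ?_, by omega⟩
              intro i h1 h2
              rw [hw0]
              exact hcT i h1 (by omega) (by omega)
            | j + 1 =>
              intro hj1
              have hPj := IH2 j (by omega) (by omega)
              have hp'1 : 1 ≤ M + 1 - j := by omega
              have hp'n : (M + 1 - j) + 1 ≤ n := by omega
              refine ⟨?_, ?_, ?_⟩
              · intro _
                have harr : M + 2 - (j + 1) = M + 1 - j := by omega
                rw [harr, hwsucc j]
                exact hidem _ hp'1 hp'n _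
              · intro i h1 h2
                have h2' : i + 1 < M + 1 - j := by omega
                rw [hwsucc j, hcomm i (M + 1 - j) h1 h2' hp'n,
                  hPj.2.1 i h1 (by omega), map_smul]
              · intro i hgt hle
                rcases Nat.lt_or_ge (M + 2 - j) i with hcase | hcase
                · rw [hwsucc j, ← hcomm (M + 1 - j) i hp'1 (by omega) (by omega),
                    hPj.2.2 i (by omega) hle, map_smul]
                · have hj0 : 1 ≤ j := by omega
                  obtain ⟨j', rfl⟩ : ∃ j', j = j' + 1 := ⟨j - 1, by omega⟩
                  have hPj' := IH2 j' (by omega) (by omega)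
                  have hi' : i = M + 1 - j' := by omega
                  subst hi'
                  have e1 : w (j' + 1 + 1) = T (M - j') (T (M + 1 - j') (w j')) := by
                    rw [hwsucc (j' + 1), hwsucc j']
                    congr 2
                    omega
                  have hMj : M - j' + 1 = M + 1 - j' := by omega
                  have hbr := hbraid (M - j') (by omega) (by omega) (w j')
                  have hx : T (M - j') (w j') = c (M - j') • w j' :=
                    hPj'.2.1 _ (by omega) (by omega)
                  have hc' : M + 1 - j' - 1 = M - j' := by omega
                  calc T (M + 1 - j') (w (j' + 1 + 1))
                      = T (M - j' + 1) (T (M - j') (T (M - j' + 1) (w j'))) := by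
                        rw [e1, ← hMj]
                    _ = T (M - j') (T (M - j' + 1) (T (M - j') (w j'))) := hbr.symm
                    _ = c (M - j') • (T (M - j') (T (M - j' + 1) (w j'))) := by
                      rw [hx, map_smul, map_smul]
                    _ = c (M + 1 - j' - 1) • w (j' + 1 + 1) := by
                      rw [hc', e1, ← hMj]
              -- end cases
        rcases Classical.em (∃ j, j ≤ M + 1 ∧ w j = 0) with hz | hz
        · haveI : DecidablePred fun j => j ≤ M + 1 ∧ w j = 0 := fun _ => Classical.propDecidable _
          let j0 := Nat.find hz
          obtain ⟨hj0le, hj0z⟩ : j0 ≤ M + 1 ∧ w j0 = 0 := Nat.find_spec hz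
          have hj01 : 1 ≤ j0 := by
            rcases Nat.eq_zero_or_pos j0 with h0 | h
            · exfalso; apply hu; rw [← hw0, ← h0]; exact hj0z
            · exact h
          set q := j0 - 1 with hqdef
          have hq1 : q + 1 = j0 := by omega
          have hqM : q ≤ M := by omega
          have hwq : w q ≠ 0 := by
            intro h
            have := Nat.find_min' hz ⟨by omega, h⟩
            omega
          have hPq := P q (by omega)
          refine ⟨w q, hwq, fun i => if i = M + 1 - q then 0 else if i = M + 2 - q then 1
            else if i < M + 1 - q then c i else c (i - 1), ?_, ?_⟩
          · intro i
            dsimp only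
            split_ifs
            exacts [Or.inl rfl, Or.inr rfl, hc01 i, hc01 (i - 1)]
          · intro i h1 hM1 h3
            show T i (w q) = (if i = M + 1 - q then (0:k) else if i = M + 2 - q then 1
              else if i < M + 1 - q then c i else c (i - 1)) • w q
            by_cases e1 : i = M + 1 - q
            · rw [if_pos e1, e1, ← hwsucc q, hq1, hj0z, zero_smul]
            · by_cases e2 : i = M + 2 - q
              · rw [if_neg e1, if_pos e2, one_smul, e2]
                exact hPq.1 (by omega)
              · by_cases e3 : i < M + 1 - q
                · rw [if_neg e1, if_neg e2, if_pos e3]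
                  exact hPq.2.1 i h1 (by omega)
                · rw [if_neg e1, if_neg e2, if_neg e3]
                  exact hPq.2.2 i (by omega) hM1
        · push_neg at hz
          have hPM := P (M + 1) (le_refl _)
          refine ⟨w (M + 1), hz _ (le_refl _), fun i => if i ≤ 1 then 1 else c (i - 1), ?_, ?_⟩
          · intro i; dsimp only; split_ifs
            exacts [Or.inr rfl, hc01 _]
          · intro i h1 h2 h3
            show T i (w (M + 1)) = (if i ≤ 1 then (1:k) else c (i - 1)) • w (M + 1)
            by_cases e : i = 1
            · rw [if_pos (by omega), one_smul, e]
              have harr : M + 2 - (M + 1) = 1 := by omega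
              have := hPM.1 (by omega)
              rwa [harr] at this
            · rw [if_neg (by omega)]
              exact hPM.2.2 i (by omega) h2
      · exact ⟨u, hu, c, hc01, fun i h1 h2 h3 => hcT i h1 (by omega) h3⟩
  obtain ⟨u, hu, c, hc01, hcT⟩ := claim n
  exact ⟨u, hu, c, hc01, fun i h1 h2 => hcT i h1 (by omega) h2⟩


private def blocksFrom : ℕ → List ℕ → List ℕ
  | _, [] => []
  | a, b :: l => (b - a) :: blocksFrom b l

private lemma blocksFrom_length (a : ℕ) (l : List ℕ) : (blocksFrom a l).length = l.length := by
  induction l generalizing a with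
  | nil => rfl
  | cons b l ih => simp [blocksFrom, ih]

private lemma blocksFrom_pos (a : ℕ) (l : List ℕ) (h : List.Chain' (· < ·) (a :: l)) :
    ∀ x ∈ blocksFrom a l, 0 < x := by
  induction l generalizing a with
  | nil => intro x hx; simp [blocksFrom] at hx
  | cons b l ih =>
    intro x hx
    replace h := List.isChain_cons_cons.1 h
    rcases List.mem_cons.1 hx with hx | hx
    · subst hx; omega
    · exact ih b h.2 x hx

private lemma blocksFrom_sum (a : ℕ) (l : List ℕ) (h : List.Chain' (· < ·) (a :: l)) :
    (blocksFrom a l).sum + a = (a :: l).getLast (by simp) := by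
  induction l generalizing a with
  | nil => simp [blocksFrom]
  | cons b l ih =>
    replace h := List.isChain_cons_cons.1 h
    have := ih b h.2
    simp only [blocksFrom, List.sum_cons]
    have hlast : (a :: b :: l).getLast (by simp) = (b :: l).getLast (by simp) := by
      simp [List.getLast_cons]
    rw [hlast, ← this]
    omega

private lemma blocksFrom_sum_take (l : List ℕ) (a i : ℕ) (hi : i < l.length)
    (h : List.Chain' (· < ·) (a :: l)) :
    ((blocksFrom a l).take (i + 1)).sum + a = l[i] := by
  induction l generalizing a i with
  | nil => simp at hi
  | cons b l ih =>
    replace h := List.isChain_cons_cons.1 h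
    cases i with
    | zero => simp [blocksFrom]; omega
    | succ i =>
      have hi' : i < l.length := by simpa using hi
      have := ih b i hi' h.2
      simp only [blocksFrom, List.take_succ_cons, List.sum_cons, List.getElem_cons_succ]
      omega

private lemma exists_comp (n : ℕ) (S : Finset ℕ) (hS : ∀ s ∈ S, 1 ≤ s ∧ s < n) :
    ∃ α : Composition n, ∀ i, i ∈ compDescents α ↔ i ∈ S := by
  rcases Nat.eq_zero_or_pos n with rfl | hn
  · refine ⟨⟨[], by simp, by simp⟩, fun i => ?_⟩
    have hSe : S = ∅ := by
      rw [Finset.eq_empty_iff_forall_notMem]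
      intro s hs; have := hS s hs; omega
    simp [compDescents, Composition.length, hSe]
  · set l0 := S.sort (· ≤ ·) with hl0
    set l : List ℕ := l0 ++ [n] with hl
    have hmem0 : ∀ x ∈ l0, x ∈ S := fun x hx => (Finset.mem_sort _).1 hx
    have hchain : List.Chain' (· < ·) (0 :: l) := by
      apply List.Pairwise.isChain
      rw [hl]
      have hp0 : List.Pairwise (· < ·) l0 := List.sortedLT_iff_pairwise.1 S.sortedLT_sort
      refine List.pairwise_cons.2 ⟨?_, ?_⟩
      · intro x hx
        rcases List.mem_append.1 hx with hx | hx
        · exact (hS x (hmem0 x hx)).1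
        · simp at hx; omega
      · rw [List.pairwise_append]
        refine ⟨hp0, by simp, ?_⟩
        intro x hx y hy
        simp at hy; subst hy
        exact (hS x (hmem0 x hx)).2
    have hlen : l.length = l0.length + 1 := by simp [hl]
    have hsum : (blocksFrom 0 l).sum = n := by
      have h1 := blocksFrom_sum 0 l hchain
      have hlast : (0 :: l).getLast (by simp) = n := by
        show ((0 :: l0) ++ [n]).getLast _ = n
        exact List.getLast_append_singleton _
      omega
    have hpos : ∀ x ∈ blocksFrom 0 l, 0 < x := blocksFrom_pos 0 l hchain
    have hget : ∀ (j : ℕ) (hj : j < l0.length), l[j]'(by omega) = l0[j] := by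
      intro j hj
      exact List.getElem_append_left (bs := [n]) hj
    refine ⟨⟨blocksFrom 0 l, fun {x} hx => hpos x hx, hsum⟩, fun i => ?_⟩
    constructor
    · intro hi
      simp only [compDescents, Finset.mem_image, Finset.mem_range] at hi
      obtain ⟨j, hj, hji⟩ := hi
      have hjlen : j < l0.length := by
        simpa [Composition.length, blocksFrom_length, hlen] using hj
      have hjl : j < l.length := by omega
      have h2 := blocksFrom_sum_take l 0 j hjl hchain
      rw [hget j hjlen] at h2
      have hji' : (List.take (j + 1) (blocksFrom 0 l)).sum = i := hji
      have : i = l0[j] := by omega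
      rw [this]
      exact hmem0 _ (List.getElem_mem _)
    · intro hi
      have hmem : i ∈ l0 := (Finset.mem_sort _).2 hi
      obtain ⟨j, hjlen, hji⟩ := List.mem_iff_getElem.1 hmem
      have hjl : j < l.length := by omega
      simp only [compDescents, Finset.mem_image, Finset.mem_range]
      refine ⟨j, ?_, ?_⟩
      · simpa [Composition.length, blocksFrom_length, hlen] using hjlen
      · have h2 := blocksFrom_sum_take l 0 j hjl hchain
        rw [hget j hjlen] at h2
        show (List.take (j + 1) (blocksFrom 0 l)).sum = i
        omega


/-- The simple objects in the category of `ℋ`-modules are exactly the modules equal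
to the one-dimensional simple `H_{|α|}(0)`-module `C_α` in degree `|α|` and zero in
all other degrees. -/
theorem hmodule_simple_iff (X : HSeq k) (hX : X.IsHModule) :
    ((∃ m, ∃ v : X.V m, v ≠ 0) ∧
      ∀ W : ∀ m, Submodule k (X.V m), X.IsSub W →
        (∀ m, W m = ⊥) ∨ (∀ m, W m = ⊤)) ↔
    ∃ (n : ℕ) (α : Composition n),
      (∀ m, m ≠ n → ∀ v : X.V m, v = 0) ∧
      Module.finrank k (X.V n) = 1 ∧
      ∀ i, 1 ≤ i → i + 1 ≤ n → ∀ v : X.V n,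
        X.T n i v = (if i ∈ compDescents α then (0 : k) else 1) • v := by
  classical
  constructor
  · rintro ⟨⟨n, v, hv⟩, hsimp⟩
    have key : ∀ p : ℕ, (∀ m, p ≤ m → ∀ x : X.V m, x = 0) ∨ (∀ m, m < p → ∀ x : X.V m, x = 0) := by
      intro p
      have hsub : X.IsSub (fun m => if p ≤ m then ⊤ else ⊥) := by
        constructor
        · intro m i h1 h2 x hx
          by_cases hp : p ≤ m
          · simp [hp]
          · simp only [if_neg hp, Submodule.mem_bot] at hx ⊢
            rw [hx, map_zero]
        · intro m x hx
          by_cases hp : p ≤ m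
          · simp [show p ≤ m + 1 by omega]
          · simp only [if_neg hp, Submodule.mem_bot] at hx
            by_cases hp' : p ≤ m + 1
            · simp [hp']
            · simp only [if_neg hp', Submodule.mem_bot]
              rw [hx, map_zero]
      rcases hsimp _ hsub with h | h
      · left; intro m hm x
        have h' := h m
        rw [if_pos hm] at h'
        have hx : x ∈ (⊥ : Submodule k (X.V m)) := by rw [← h']; exact Submodule.mem_top
        simpa using hx
      · right; intro m hm x
        have h' := h m
        rw [if_neg (by omega)] at h'
        have hx : x ∈ (⊥ : Submodule k (X.V m)) := by rw [h']; exact Submodule.mem_top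
        simpa using hx
    have hconc : ∀ m, m ≠ n → ∀ x : X.V m, x = 0 := by
      intro m hm x
      rcases key n with h | h
      · exact absurd (h n le_rfl v) hv
      rcases key (n + 1) with h' | h'
      · rcases Nat.lt_or_ge m n with hc | hc
        · exact h m hc x
        · exact h' m (by omega) x
      · exact absurd (h' n (by omega) v) hv
    have deg_simp : ∀ U : Submodule k (X.V n),
        (∀ i, 1 ≤ i → i + 1 ≤ n → ∀ x ∈ U, X.T n i x ∈ U) → U = ⊥ ∨ U = ⊤ := by
      intro U hU
      set W : ∀ m, Submodule k (X.V m) := fun m => if h : m = n then h ▸ U else ⊥ with hWdef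
      have hWn : W n = U := by simp [hWdef]
      have hWne : ∀ m, m ≠ n → W m = ⊥ := fun m h => dif_neg h
      have hsub : X.IsSub W := by
        constructor
        · intro m i h1 h2 x hx
          rcases eq_or_ne m n with rfl | hm
          · rw [hWn] at hx ⊢
            exact hU i h1 h2 x hx
          · rw [hWne m hm] at hx ⊢
            rw [Submodule.mem_bot] at hx ⊢
            rw [hx, map_zero]
        · intro m x hx
          by_cases he : m = n
          · rw [hWne (m + 1) (by omega)]
            have hz : X.φ m x = 0 := hconc (m + 1) (by omega) _
            rw [hz]
            exact Submodule.zero_mem _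
          · rw [hWne m he, Submodule.mem_bot] at hx
            rw [hx, map_zero]
            exact Submodule.zero_mem _
      rcases hsimp W hsub with h | h
      · exact Or.inl (by rw [← hWn, h n])
      · exact Or.inr (by rw [← hWn, h n])
    obtain ⟨u, hu, c, hc01, hcT⟩ := exists_common_eigen (X.T n) n
      (fun i h1 h2 x => by simpa using LinearMap.ext_iff.1 (hX.1 n i h1 h2) x)
      (fun i h1 h2 x => by simpa using LinearMap.ext_iff.1 (hX.2.1 n i h1 h2) x)
      (fun i j h1 h2 h3 x => by simpa using LinearMap.ext_iff.1 (hX.2.2.1 n i j h1 h2 h3) x)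
      v hv
    have hspan : Submodule.span k {u} = ⊤ := by
      have hclosed : ∀ i, 1 ≤ i → i + 1 ≤ n →
          ∀ x ∈ Submodule.span k {u}, X.T n i x ∈ Submodule.span k {u} := by
        intro i h1 h2 x hx
        rw [Submodule.mem_span_singleton] at hx ⊢
        obtain ⟨a, rfl⟩ := hx
        exact ⟨a * c i, by rw [map_smul, hcT i h1 h2, smul_smul]⟩
      rcases deg_simp (Submodule.span k {u}) hclosed with h | h
      · exfalso
        apply hu
        rw [← Submodule.mem_bot (R := k), ← h]
        exact Submodule.mem_span_singleton_self u
      · exact h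
    have hall : ∀ x : X.V n, ∃ a : k, a • u = x := fun x =>
      Submodule.mem_span_singleton.1 (hspan ▸ Submodule.mem_top)
    have hfr : Module.finrank k (X.V n) = 1 := finrank_eq_one_iff'.2 ⟨u, hu, hall⟩
    obtain ⟨α, hα⟩ := exists_comp n ((Finset.Ico 1 n).filter fun i => c i = 0) (by
      intro s hs
      rw [Finset.mem_filter, Finset.mem_Ico] at hs
      exact ⟨hs.1.1, hs.1.2⟩)
    refine ⟨n, α, hconc, hfr, ?_⟩
    intro i h1 h2 x
    obtain ⟨a, rfl⟩ := hall x
    have hmem : i ∈ compDescents α ↔ c i = 0 := by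
      rw [hα i, Finset.mem_filter, Finset.mem_Ico]
      constructor
      · exact fun h => h.2
      · exact fun h => ⟨⟨h1, by omega⟩, h⟩
    rw [map_smul, hcT i h1 h2, smul_smul, smul_smul]
    by_cases hd : i ∈ compDescents α
    · rw [if_pos hd, hmem.1 hd, mul_zero, zero_mul]
    · rw [if_neg hd, (hc01 i).resolve_left (fun h => hd (hmem.2 h)), mul_one, one_mul]
  · rintro ⟨n, α, hconc, hfr, hT⟩
    obtain ⟨u, hu, hall⟩ := finrank_eq_one_iff'.1 hfr
    refine ⟨⟨n, u, hu⟩, ?_⟩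
    intro W hW
    have htriv : ∀ m, m ≠ n → (W m = ⊥ ∧ W m = ⊤) := by
      intro m hm
      constructor
      · rw [Submodule.eq_bot_iff]
        intro x _
        exact hconc m hm x
      · rw [eq_top_iff]
        intro x _
        have hx : x = 0 := hconc m hm x
        rw [hx]
        exact Submodule.zero_mem _
    by_cases hWn : W n = ⊥
    · left
      intro m
      rcases eq_or_ne m n with rfl | hm
      · exact hWn
      · exact (htriv m hm).1
    · right
      have hWn' : W n = ⊤ := by
        have hex : ∃ x ∈ W n, x ≠ 0 := by
          by_contra h
          push_neg at h
          apply hWn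
          rw [Submodule.eq_bot_iff]
          exact h
        obtain ⟨x, hxW, hx0⟩ := hex
        obtain ⟨a, ha⟩ := hall x
        have ha0 : a ≠ 0 := by
          rintro rfl
          rw [zero_smul] at ha
          exact hx0 ha.symm
        have huW : u ∈ W n := by
          have he : a⁻¹ • x = u := by rw [← ha, smul_smul, inv_mul_cancel₀ ha0, one_smul]
          rw [← he]
          exact Submodule.smul_mem _ _ hxW
        rw [eq_top_iff]
        intro y _
        obtain ⟨b, hb⟩ := hall y
        rw [← hb]
        exact Submodule.smul_mem _ _ huW
      intro m
      rcases eq_or_ne m n with rfl | hm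
      · exact hWn'
      · exact (htriv m hm).2
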